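/- Let G be a group with unit e and Λ : G × G → ℂ a normalised 2-cocycle with values in the unit circle: |Λ(g,h)| = 1, Λ(e,g) = Λ(g,e) = 1, and Λ(g, h·k)·Λ(h, k) = Λ(g·h, k)·Λ(g, h) for all g, h, k ∈ G. Let A = ⊕_{g∈G} A_g be a G-graded unital *-algebra over ℂ, and define on homogeneous elements a ∈ A_g, b ∈ A_h the deformed product a ∗ b := Λ(g,h)·(a·b) ∈ A_{gh} and the deformed involution a† := conj(Λ(g⁻¹, g))·a* ∈ A_{g⁻¹}. Then the bilinear extension of ∗ and the conjugate-linear extension of † make A into a G-graded unital *-algebra A^Λ with the same grading and the same unit: ∗ is associative, 1 ∗ a = a ∗ 1 = a, (a†)† = a, and (a ∗ b)† = b† ∗ a†. Moreover a ∗ b = a·b whenever a ∈ A_e or b ∈ A_e, and a† ∗ b = a*·b for all a, b ∈ A_g and all g ∈ G. In particular, Λ(g, g⁻¹) = Λ(g⁻¹, g) and Λ(g,g⁻¹)·Λ(h,h⁻¹) = Λ(g,h)·Λ(gh, h⁻¹g⁻¹)·Λ(h⁻¹, g⁻¹) for all g, h ∈ G. -/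

import Mathlib

/-- A `G`-graded unital `⋆`-algebra over `ℂ`: a direct sum decomposition
`A = ⊕_{g ∈ G} A_g` into subspaces with `A_g · A_h ⊆ A_{gh}`, `(A_g)* = A_{g⁻¹}` and
`1 ∈ A_e`. -/
structure GradedStarAlgebra (G : Type*) [Group G]
    (A : Type*) [Ring A] [Algebra ℂ A] [StarRing A] [StarModule ℂ A] where
  fiber : G → Submodule ℂ A
  mul_mem' : ∀ {g h : G} {a b : A}, a ∈ fiber g → b ∈ fiber h → a * b ∈ fiber (g * h)
  star_mem' : ∀ {g : G} {a : A}, a ∈ fiber g → star a ∈ fiber g⁻¹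
  one_mem' : (1 : A) ∈ fiber 1
  decompose' : ∀ a : A, ∃ (F : Finset G) (c : G → A),
    (∀ g : G, c g ∈ fiber g) ∧ a = ∑ g ∈ F, c g
  independent' : ∀ (F : Finset G) (c : G → A), (∀ g : G, c g ∈ fiber g) →
    ∑ g ∈ F, c g = 0 → ∀ g ∈ F, c g = 0

variable {G : Type*} [Group G]
variable {A : Type*} [Ring A] [Algebra ℂ A] [StarRing A] [StarModule ℂ A]

/-- The deformed product on homogeneous elements: for `a ∈ A_g` and `b ∈ A_h`,
`a ∗ b := Λ(g, h) • (a · b)`. -/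
def dMul (Λ : G → G → ℂ) (g h : G) (a b : A) : A := Λ g h • (a * b)

/-- The deformed involution on homogeneous elements: for `a ∈ A_g`,
`a† := conj (Λ(g⁻¹, g)) • a*`. -/
def dStar (Λ : G → G → ℂ) (g : G) (a : A) : A := (starRingEnd ℂ) (Λ g⁻¹ g) • star a

/-- **Rieffel deformation.**  Let `Λ` be a normalised circle-valued 2-cocycle on `G` and `A` a
`G`-graded unital `⋆`-algebra.  The deformed product `a ∗ b = Λ(g,h) • (a·b)` and involution
`a† = conj (Λ(g⁻¹,g)) • a*` make `A` into a `G`-graded unital `⋆`-algebra `A^Λ` with the same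
grading and unit: on homogeneous elements, `∗` preserves the grading and is associative and
unital, `†` is involutive and antimultiplicative, `a ∗ b = a·b` when `a ∈ A_e` or `b ∈ A_e`,
and `a† ∗ b = a*·b` for `a, b ∈ A_g`.  In particular `Λ(g, g⁻¹) = Λ(g⁻¹, g)` and
`Λ(g,g⁻¹) Λ(h,h⁻¹) = Λ(g,h) Λ(gh, h⁻¹g⁻¹) Λ(h⁻¹, g⁻¹)` for all `g, h ∈ G`. -/
theorem rieffel_deformation (S : GradedStarAlgebra G A) (Λ : G → G → ℂ)
    (hΛ_norm : ∀ g h : G, ‖Λ g h‖ = 1)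
    (hΛ_one : ∀ g : G, Λ 1 g = 1 ∧ Λ g 1 = 1)
    (hΛ_cocycle : ∀ g h k : G, Λ g (h * k) * Λ h k = Λ (g * h) k * Λ g h) :
    -- the deformation preserves the grading
    (∀ (g h : G) (a b : A), a ∈ S.fiber g → b ∈ S.fiber h →
      dMul Λ g h a b ∈ S.fiber (g * h)) ∧
    (∀ (g : G) (a : A), a ∈ S.fiber g → dStar Λ g a ∈ S.fiber g⁻¹) ∧
    -- `∗` is associative on homogeneous elements
    (∀ (g h k : G) (a b c : A), a ∈ S.fiber g → b ∈ S.fiber h → c ∈ S.fiber k →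
      dMul Λ (g * h) k (dMul Λ g h a b) c = dMul Λ g (h * k) a (dMul Λ h k b c)) ∧
    -- `1` is a unit for `∗`
    (∀ (g : G) (a : A), a ∈ S.fiber g → dMul Λ 1 g 1 a = a ∧ dMul Λ g 1 a 1 = a) ∧
    -- `†` is an involution
    (∀ (g : G) (a : A), a ∈ S.fiber g → dStar Λ g⁻¹ (dStar Λ g a) = a) ∧
    -- `†` is antimultiplicative:  `(a ∗ b)† = b† ∗ a†`
    (∀ (g h : G) (a b : A), a ∈ S.fiber g → b ∈ S.fiber h →
      dStar Λ (g * h) (dMul Λ g h a b) = dMul Λ h⁻¹ g⁻¹ (dStar Λ h b) (dStar Λ g a)) ∧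
    -- the deformed product agrees with the original one if one factor lies in `A_e`
    (∀ (h : G) (a b : A), a ∈ S.fiber 1 → b ∈ S.fiber h → dMul Λ 1 h a b = a * b) ∧
    (∀ (g : G) (a b : A), a ∈ S.fiber g → b ∈ S.fiber 1 → dMul Λ g 1 a b = a * b) ∧
    -- `a† ∗ b = a* · b` for `a, b ∈ A_g`
    (∀ (g : G) (a b : A), a ∈ S.fiber g → b ∈ S.fiber g →
      dMul Λ g⁻¹ g (dStar Λ g a) b = star a * b) ∧
    -- scalar identities for the cocycle
    (∀ g : G, Λ g g⁻¹ = Λ g⁻¹ g) ∧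
    (∀ g h : G, Λ g g⁻¹ * Λ h h⁻¹ = Λ g h * Λ (g * h) (h⁻¹ * g⁻¹) * Λ h⁻¹ g⁻¹) := by
  have hne : ∀ g h : G, Λ g h ≠ 0 := fun g h h0 => by
    have := hΛ_norm g h; rw [h0] at this; simp at this
  have hconj : ∀ g h : G, (starRingEnd ℂ) (Λ g h) * Λ g h = 1 := fun g h => by
    rw [mul_comm, Complex.mul_conj, ← Complex.sq_norm, hΛ_norm]; norm_num
  have hsym : ∀ g : G, Λ g g⁻¹ = Λ g⁻¹ g := by
    intro g
    have := hΛ_cocycle g g⁻¹ g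
    simpa [(hΛ_one g).1, (hΛ_one g).2] using this.symm
  have hid2 : ∀ g h : G, Λ g g⁻¹ * Λ h h⁻¹ = Λ g h * Λ (g * h) (h⁻¹ * g⁻¹) * Λ h⁻¹ g⁻¹ := by
    intro g h
    have c1 := hΛ_cocycle g h (h⁻¹ * g⁻¹)
    have c2 := hΛ_cocycle h h⁻¹ g⁻¹
    rw [show h * (h⁻¹ * g⁻¹) = g⁻¹ by group] at c1
    rw [show h * h⁻¹ = (1 : G) by group, (hΛ_one g⁻¹).1, one_mul] at c2
    calc Λ g g⁻¹ * Λ h h⁻¹ = Λ g g⁻¹ * (Λ h (h⁻¹ * g⁻¹) * Λ h⁻¹ g⁻¹) := by rw [c2]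
      _ = (Λ g g⁻¹ * Λ h (h⁻¹ * g⁻¹)) * Λ h⁻¹ g⁻¹ := by ring
      _ = Λ g h * Λ (g * h) (h⁻¹ * g⁻¹) * Λ h⁻¹ g⁻¹ := by rw [c1]; ring
  refine ⟨?_, ?_, ?_, ?_, ?_, ?_, ?_, ?_, ?_, hsym, hid2⟩
  · intro g h a b ha hb
    exact Submodule.smul_mem _ _ (S.mul_mem' ha hb)
  · intro g a ha
    exact Submodule.smul_mem _ _ (S.star_mem' ha)
  · intro g h k a b c _ _ _
    simp only [dMul, smul_mul_assoc, mul_smul_comm, smul_smul, mul_assoc]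
    congr 1
    linear_combination - hΛ_cocycle g h k
  · intro g a _
    simp [dMul, (hΛ_one g).1, (hΛ_one g).2]
  · intro g a _
    simp only [dStar, star_smul, smul_smul, star_star, inv_inv, RCLike.star_def,
      Complex.conj_conj]
    rw [hsym g]
    rw [hconj g⁻¹ g]
    simp
  · intro g h a b _ _
    simp only [dStar, dMul, star_smul, smul_smul, star_mul, smul_mul_assoc, mul_smul_comm,
      RCLike.star_def, map_mul, mul_inv_rev]
    congr 1
    have key := hid2 g h
    have hs := hsym (g*h)
    rw [mul_inv_rev] at hs
    rw [hsym g, hsym h, hs] at key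
    have h1 := hne g⁻¹ g; have h2 := hne h⁻¹ h; have h3 := hne (h⁻¹*g⁻¹) (g*h)
    have e1 : (starRingEnd ℂ) (Λ g⁻¹ g) = (Λ g⁻¹ g)⁻¹ :=
      eq_inv_of_mul_eq_one_left (hconj g⁻¹ g)
    have e2 : (starRingEnd ℂ) (Λ h⁻¹ h) = (Λ h⁻¹ h)⁻¹ :=
      eq_inv_of_mul_eq_one_left (hconj h⁻¹ h)
    have e3 : (starRingEnd ℂ) (Λ (h⁻¹*g⁻¹) (g*h)) = (Λ (h⁻¹*g⁻¹) (g*h))⁻¹ :=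
      eq_inv_of_mul_eq_one_left (hconj _ _)
    have e4 : (starRingEnd ℂ) (Λ g h) = (Λ g h)⁻¹ :=
      eq_inv_of_mul_eq_one_left (hconj g h)
    have h4 := hne g h
    have aux : ∀ w x z p q : ℂ, w ≠ 0 → x ≠ 0 → p ≠ 0 → q ≠ 0 → p * q = w * x * z →
        x⁻¹ * w⁻¹ = z * (p⁻¹ * q⁻¹) := by
      intro w x z p q hw hx hp hq hpq
      field_simp
      linear_combination hpq
    rw [e1, e2, e3, e4]
    exact aux _ _ _ _ _ h4 h3 h1 h2 key
  · intro h a b _ _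
    simp [dMul, (hΛ_one h).1]
  · intro g a b _ _
    simp [dMul, (hΛ_one g).2]
  · intro g a b _ _
    simp only [dMul, dStar, smul_mul_assoc, smul_smul]
    rw [mul_comm, hconj g⁻¹ g, one_smul]
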